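/- Let f : [a,∞) → ℝ and α ∈ (0,1]. Suppose f has a conformable derivative of order α on some interval (a, a+ε) with ε > 0, and the limit T^α_a f(a) := lim_{t→a+} T^α_a f(t) exists. Then for every β ∈ (0,α), f has a conformable derivative of order β on (a, a+ε) and T^β_a f(a) := lim_{t→a+} T^β_a f(t) exists and equals 0. -/

import Mathlib

open Filter Set Real

/-- `f` has (two-sided) left-sided conformable derivative of order `α`
with lower terminal `a` at the point `t`, with value `L`. -/
def HasConfDerivAt (a α : ℝ) (f : ℝ → ℝ) (t L : ℝ) : Prop :=
  Filter.Tendsto (fun θ : ℝ => (f (t + θ * (t - a) ^ (1 - α)) - f t) / θ)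
    (nhdsWithin 0 {0}ᶜ) (nhds L)

theorem stmt11 (a α : ℝ) (hα : 0 < α) (hα1 : α ≤ 1)
    (f D : ℝ → ℝ) (ε : ℝ) (hε : 0 < ε)
    (hD : ∀ t ∈ Set.Ioo a (a + ε), HasConfDerivAt a α f t (D t))
    (L : ℝ) (hL : Filter.Tendsto D (nhdsWithin a (Set.Ioi a)) (nhds L)) :
    ∀ β : ℝ, 0 < β → β < α →
      ∃ E : ℝ → ℝ, (∀ t ∈ Set.Ioo a (a + ε), HasConfDerivAt a β f t (E t)) ∧
        Filter.Tendsto E (nhdsWithin a (Set.Ioi a)) (nhds 0) := by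
  intro β hβ hβα
  refine ⟨fun t => (t - a) ^ (α - β) * D t, ?_, ?_⟩
  · intro t ht
    have hta : (0:ℝ) < t - a := sub_pos.2 ht.1
    set c : ℝ := (t - a) ^ (α - β) with hc
    have hcpos : 0 < c := Real.rpow_pos_of_pos hta _
    have hkey : (t - a) ^ (1 - β) = c * (t - a) ^ (1 - α) := by
      rw [hc, ← Real.rpow_add hta]; ring_nf
    have hmap : Filter.Tendsto (fun θ : ℝ => c * θ) (nhdsWithin 0 {0}ᶜ)
        (nhdsWithin 0 {0}ᶜ) := by
      apply Filter.Tendsto.inf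
      · have : Filter.Tendsto (fun θ : ℝ => c * θ) (nhds 0) (nhds (c * 0)) :=
          (continuous_const.mul continuous_id).tendsto 0
        simpa using this
      · refine Filter.tendsto_principal_principal.2 fun θ hθ => ?_
        simp only [Set.mem_compl_iff, Set.mem_singleton_iff] at hθ ⊢
        exact mul_ne_zero hcpos.ne' hθ
    have := ((hD t ht).comp hmap).const_mul c
    refine this.congr fun θ => ?_
    simp only [Function.comp]
    rw [hkey]
    rw [show t + θ * (c * (t - a) ^ (1 - α)) = t + c * θ * (t - a) ^ (1 - α) by ring]
    rw [mul_div_assoc']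
    exact mul_div_mul_left _ _ hcpos.ne'
  · have h1 : Filter.Tendsto (fun t : ℝ => (t - a) ^ (α - β))
        (nhdsWithin a (Set.Ioi a)) (nhds 0) := by
      have hc : ContinuousAt (fun x : ℝ => x ^ (α - β)) 0 :=
        Real.continuousAt_rpow_const 0 (α - β) (Or.inr (by linarith))
      have h0 : (0:ℝ) ^ (α - β) = 0 := Real.zero_rpow (by linarith)
      have : Filter.Tendsto (fun t : ℝ => (t - a) ^ (α - β)) (nhds a) (nhds 0) := by
        have hsub : Filter.Tendsto (fun t : ℝ => t - a) (nhds a) (nhds 0) := by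
          simpa using ((continuous_sub_right a).tendsto a)
        simpa [h0, Function.comp_def] using hc.tendsto.comp hsub
      exact this.mono_left nhdsWithin_le_nhds
    simpa using h1.mul hL
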